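/- Let g : [t₀,∞) → ℝ be a nonnegative C¹ function satisfying ġ(t) ≤ -γ(t)g(t) + α(t,g(t)) + β(t) for all t ≥ t₀, where β, γ are continuous on [t₀,∞), and α(t,y) ≥ 0 is continuous in t and nondecreasing in y. Suppose there exists μ ∈ C¹([t₀,∞)) with μ(t) > 0 such that α(t, 1/μ(t)) + β(t) ≤ (1/μ(t))(γ(t) - μ'(t)/μ(t)) for all t ≥ t₀, and μ(t₀)g(t₀) < 1. Then g(t) < 1/μ(t) for all t ≥ t₀. -/

import Mathlib

open Set Filter

/-- Theorem 1 (main continuous inequality): if `ġ ≤ -γ g + α(t,g) + β`,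
`α(t, 1/μ) + β ≤ (1/μ)(γ - μ'/μ)` and `μ(t₀) g(t₀) < 1`, then `g < 1/μ` on `[t₀,∞)`. -/
theorem stmt0
    (t₀ : ℝ) (ht₀ : 0 ≤ t₀)
    (g g' γ β μ μ' : ℝ → ℝ) (α : ℝ → ℝ → ℝ)
    (hgnonneg : ∀ t ∈ Ici t₀, 0 ≤ g t)
    (hg : ∀ t ∈ Ici t₀, HasDerivAt g (g' t) t)
    (hg'cont : ContinuousOn g' (Ici t₀))
    (hβ : ContinuousOn β (Ici t₀))
    (hγ : ContinuousOn γ (Ici t₀))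
    (hαnonneg : ∀ t ∈ Ici t₀, ∀ y, 0 ≤ y → 0 ≤ α t y)
    (hαcont : ∀ y, 0 ≤ y → ContinuousOn (fun t => α t y) (Ici t₀))
    (hαmono : ∀ t ∈ Ici t₀, ∀ y z, 0 ≤ y → y ≤ z → α t y ≤ α t z)
    (hineq : ∀ t ∈ Ici t₀, g' t ≤ -γ t * g t + α t (g t) + β t)
    (hμpos : ∀ t ∈ Ici t₀, 0 < μ t)
    (hμ : ∀ t ∈ Ici t₀, HasDerivAt μ (μ' t) t)
    (hμ'cont : ContinuousOn μ' (Ici t₀))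
    (hcomp : ∀ t ∈ Ici t₀, α t (1 / μ t) + β t ≤ (1 / μ t) * (γ t - μ' t / μ t))
    (hinit : μ t₀ * g t₀ < 1) :
    ∀ t ∈ Ici t₀, g t < 1 / μ t := by
  intro T hT
  by_contra hcon
  push_neg at hcon
  -- continuity
  have hgc : ContinuousOn g (Ici t₀) := fun s hs => (hg s hs).continuousAt.continuousWithinAt
  have hμc : ContinuousOn μ (Ici t₀) := fun s hs => (hμ s hs).continuousAt.continuousWithinAt
  have hwc : ContinuousOn (fun s => 1 / μ s - g s) (Ici t₀) :=
    (continuousOn_const.div hμc (fun s hs => (hμpos s hs).ne')).sub hgc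
  -- the "bad" set
  set A : Set ℝ := Icc t₀ T ∩ (fun s => 1 / μ s - g s) ⁻¹' Iic 0 with hAdef
  have hAne : A.Nonempty := ⟨T, ⟨hT, le_refl T⟩, by simp only [mem_preimage, mem_Iic]; linarith⟩
  have hAclosed : IsClosed A :=
    (hwc.mono Icc_subset_Ici_self).preimage_isClosed_of_isClosed isClosed_Icc isClosed_Iic
  have hAbdd : BddBelow A := ⟨t₀, fun s hs => hs.1.1⟩
  set t₁ := sInf A with ht₁def
  have ht₁A : t₁ ∈ A := hAclosed.csInf_mem hAne hAbdd
  have ht₁Icc : t₁ ∈ Icc t₀ T := ht₁A.1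
  have hwt₁ : 1 / μ t₁ - g t₁ ≤ 0 := ht₁A.2
  have hμt₀ := hμpos t₀ self_mem_Ici
  have hwt₀ : 0 < 1 / μ t₀ - g t₀ := by
    rw [sub_pos, lt_div_iff₀ hμt₀]
    linarith [mul_comm (μ t₀) (g t₀)]
  have ht₀le : t₀ ≤ t₁ := ht₁Icc.1
  -- strictly below the barrier before t₁
  have hlt : ∀ s ∈ Ico t₀ t₁, g s < 1 / μ s := by
    intro s hs
    by_contra h
    push_neg at h
    have hsA : s ∈ A := ⟨⟨hs.1, hs.2.le.trans ht₁Icc.2⟩, by simp only [mem_preimage, mem_Iic]; linarith⟩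
    exact absurd (csInf_le hAbdd hsA) (not_le.mpr hs.2)
  -- bound for γ on the compact interval
  obtain ⟨C, hC⟩ := (isCompact_Icc : IsCompact (Icc t₀ t₁)).exists_bound_of_continuousOn
    (hγ.mono Icc_subset_Ici_self)
  -- the auxiliary function φ = w * exp(C s)
  set φ : ℝ → ℝ := fun s => (1 / μ s - g s) * Real.exp (C * s) with hφdef
  -- derivative of φ at points of Ici t₀
  have hφderiv : ∀ s ∈ Ici t₀, HasDerivAt φ
      (((-(μ' s) / μ s ^ 2) - g' s) * Real.exp (C * s)
        + (1 / μ s - g s) * (Real.exp (C * s) * C)) s := by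
    intro s hs
    have h1 : HasDerivAt (fun x => 1 / μ x - g x) ((-(μ' s) / μ s ^ 2) - g' s) s := by
      have hinv : HasDerivAt (fun x => 1 / μ x) (-(μ' s) / μ s ^ 2) s := by
        have := (hμ s hs).inv (hμpos s hs).ne'
        simp only [one_div]
        exact this
      exact hinv.sub (hg s hs)
    have h2 : HasDerivAt (fun x => Real.exp (C * x)) (Real.exp (C * s) * C) s := by
      simpa using (((hasDerivAt_id s).const_mul C).exp)
    exact h1.mul h2
  -- φ is monotone on [t₀, t₁]
  have hmono : MonotoneOn φ (Icc t₀ t₁) := by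
    apply monotoneOn_of_deriv_nonneg (convex_Icc t₀ t₁)
    · intro s hs
      exact ((hφderiv s (Icc_subset_Ici_self hs)).continuousAt).continuousWithinAt
    · intro s hs
      rw [interior_Icc] at hs
      exact ((hφderiv s hs.1.le).differentiableAt).differentiableWithinAt
    · intro s hs
      rw [interior_Icc] at hs
      have hsIci : s ∈ Ici t₀ := hs.1.le
      rw [(hφderiv s hsIci).deriv]
      have hμs := hμpos s hsIci
      have hgs := hgnonneg s hsIci
      have hgslt : g s < 1 / μ s := hlt s ⟨hs.1.le, hs.2⟩
      have hws : 0 < 1 / μ s - g s := by linarith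
      have hineq1 : g' s ≤ -γ s * g s + α s (1 / μ s) + β s := by
        have := hineq s hsIci
        have := hαmono s hsIci (g s) (1 / μ s) hgs hgslt.le
        linarith
      have hineq2 : g' s ≤ -γ s * g s + (1 / μ s) * (γ s - μ' s / μ s) := by
        have := hcomp s hsIci
        linarith
      -- w' ≥ -γ w
      have hw' : -γ s * (1 / μ s - g s) ≤ (-(μ' s) / μ s ^ 2) - g' s := by
        have hexpand : (1 / μ s) * (γ s - μ' s / μ s) = γ s / μ s - μ' s / μ s ^ 2 := by
          field_simp
        rw [hexpand] at hineq2
        have : -γ s * (1 / μ s - g s) = γ s * g s - γ s / μ s := by ring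
        rw [this]
        ring_nf at hineq2 ⊢
        linarith
      have hγb : γ s ≤ C := le_trans (le_abs_self _) (by simpa using hC s ⟨hs.1.le, hs.2.le⟩)
      have key : 0 ≤ ((-(μ' s) / μ s ^ 2) - g' s) + C * (1 / μ s - g s) := by
        have := mul_le_mul_of_nonneg_right hγb hws.le
        ring_nf at hw' this ⊢
        linarith
      have hexp : 0 < Real.exp (C * s) := Real.exp_pos _
      nlinarith [key, hexp]
  -- contradiction: φ t₀ ≤ φ t₁, but φ t₀ > 0 ≥ φ t₁
  have h1 : φ t₀ ≤ φ t₁ := hmono ⟨le_refl t₀, ht₀le⟩ ⟨ht₀le, le_refl t₁⟩ ht₀le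
  have h2 : 0 < φ t₀ := mul_pos hwt₀ (Real.exp_pos _)
  have h3 : φ t₁ ≤ 0 := mul_nonpos_of_nonpos_of_nonneg hwt₁ (Real.exp_pos _).le
  linarith
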